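/- Let f : ℝ^d × ℝ → ℝ be L₁-smooth in x (i.e., ∇ₓf(·;t) is L₁-Lipschitz for each t) and G₂-Lipschitz in t (i.e., |f(x;s) − f(x;t)| ≤ G₂|s−t| for all x). Consider the gradient descent iterates x_{k+1} = x_k − (1/L₁)∇ₓf(x_k; t_k) with t_k = kh. Then for T = (f(x₀;t₀) − f₀*)/(2h) iterations (where f₀* = min_x f(x;t₀) and the optimal value is Lipschitz in t as in the previous lemma), the average gradient norm satisfies (1/T) Σ_{k=0}^{T−1} ‖∇ₓf(x_k;t_k)‖ ≤ 2√(L₁(1+G₂)h). -/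

import Mathlib

open InnerProductSpace

local notation "⟪" x ", " y "⟫" => @inner ℝ _ _ x y

lemma descent_lemma {E : Type*} [NormedAddCommGroup E] [InnerProductSpace ℝ E] [CompleteSpace E]
    (F : E → ℝ) (G : E → E) (L : ℝ)
    (hgrad : ∀ z, HasGradientAt F (G z) z)
    (hlip : ∀ a b, ‖G a - G b‖ ≤ L * ‖a - b‖)
    (x y : E) :
    F y ≤ F x + ⟪G x, y - x⟫ + L / 2 * ‖y - x‖ ^ 2 := by
  set v := y - x with hv
  set φ : ℝ → ℝ := fun s => F (x + s • v) - s * ⟪G x, v⟫ - L * s ^ 2 / 2 * ‖v‖ ^ 2 with hφ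
  have hderiv : ∀ s : ℝ, HasDerivAt φ
      (⟪G (x + s • v), v⟫ - ⟪G x, v⟫ - L * s * ‖v‖ ^ 2) s := by
    intro s
    have hc : HasDerivAt (fun s : ℝ => x + s • v) v s := by
      simpa using ((hasDerivAt_id s).smul_const v).const_add x
    have h1 : HasDerivAt (fun s : ℝ => F (x + s • v)) (⟪G (x + s • v), v⟫) s := by
      have := ((hgrad (x + s • v)).hasFDerivAt).comp_hasDerivAt s hc
      simpa [toDual_apply_apply, Function.comp_def] using this
    have h2 : HasDerivAt (fun s : ℝ => s * ⟪G x, v⟫) (⟪G x, v⟫) s := by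
      simpa using (hasDerivAt_id s).mul_const (⟪G x, v⟫)
    have h3 : HasDerivAt (fun s : ℝ => L * s ^ 2 / 2 * ‖v‖ ^ 2) (L * s * ‖v‖ ^ 2) s := by
      have : HasDerivAt (fun s : ℝ => s ^ 2) (2 * s) s := by
        simpa using hasDerivAt_pow 2 s
      have := ((this.const_mul L).div_const 2).mul_const (‖v‖ ^ 2)
      exact this.congr_deriv (by ring)
    exact (h1.sub h2).sub h3
  have hanti : AntitoneOn φ (Set.Icc 0 1) := by
    apply antitoneOn_of_deriv_nonpos (convex_Icc 0 1)
    · exact fun s _ => (hderiv s).continuousAt.continuousWithinAt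
    · exact fun s _ => (hderiv s).differentiableAt.differentiableWithinAt
    · intro s hs
      rw [interior_Icc] at hs
      rw [(hderiv s).deriv]
      have h1 : ⟪G (x + s • v), v⟫ - ⟪G x, v⟫ = ⟪G (x + s • v) - G x, v⟫ := by
        rw [inner_sub_left]
      rw [h1]
      have h2 : ⟪G (x + s • v) - G x, v⟫ ≤ ‖G (x + s • v) - G x‖ * ‖v‖ := real_inner_le_norm _ _
      have h3 : ‖G (x + s • v) - G x‖ ≤ L * (s * ‖v‖) := by
        have := hlip (x + s • v) x
        simpa [norm_smul, abs_of_nonneg hs.1.le, mul_assoc] using this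
      nlinarith [norm_nonneg v, hs.1, mul_le_mul_of_nonneg_right h3 (norm_nonneg v)]
  have h01 := hanti (Set.left_mem_Icc.2 zero_le_one) (Set.right_mem_Icc.2 zero_le_one) zero_le_one
  simp only [hφ] at h01
  have : x + (1:ℝ) • v = y := by simp [hv]
  rw [this] at h01
  simp at h01
  linarith

lemma descent_step {E : Type*} [NormedAddCommGroup E] [InnerProductSpace ℝ E] [CompleteSpace E]
    (F : E → ℝ) (G : E → E) (L : ℝ) (hL : 0 < L)
    (hgrad : ∀ z, HasGradientAt F (G z) z)
    (hlip : ∀ a b, ‖G a - G b‖ ≤ L * ‖a - b‖)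
    (x : E) :
    F (x - (1 / L) • G x) ≤ F x - 1 / (2 * L) * ‖G x‖ ^ 2 := by
  have := descent_lemma F G L hgrad hlip x (x - (1 / L) • G x)
  have hsub : x - (1 / L) • G x - x = -((1 / L) • G x) := by abel
  rw [hsub] at this
  have hinner : ⟪G x, -((1 / L) • G x)⟫ = -(1 / L) * ‖G x‖ ^ 2 := by
    rw [inner_neg_right, real_inner_smul_right, real_inner_self_eq_norm_sq]
    ring
  have hnorm : ‖-((1 / L) • G x)‖ ^ 2 = (1 / L) ^ 2 * ‖G x‖ ^ 2 := by
    rw [norm_neg, norm_smul]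
    simp [abs_of_pos (by positivity : (0:ℝ) < 1 / L), mul_pow]
  rw [hinner, hnorm] at this
  have hL' : L ≠ 0 := ne_of_gt hL
  calc F (x - (1 / L) • G x) ≤ F x + -(1 / L) * ‖G x‖ ^ 2 + L / 2 * ((1 / L) ^ 2 * ‖G x‖ ^ 2) :=
        this
    _ = F x - 1 / (2 * L) * ‖G x‖ ^ 2 := by field_simp; ring

/-- Theorem 1: average gradient norm bound for time-varying gradient descent. -/
theorem stmt_1 {d : ℕ} (f : EuclideanSpace ℝ (Fin d) → ℝ → ℝ)
    (g : EuclideanSpace ℝ (Fin d) → ℝ → EuclideanSpace ℝ (Fin d))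
    (L₁ G₂ h : ℝ) (hL₁ : 0 < L₁) (hh : 0 < h) (hG₂ : 0 ≤ G₂)
    (hgrad : ∀ (t : ℝ) (x : EuclideanSpace ℝ (Fin d)),
      HasGradientAt (fun y => f y t) (g x t) x)
    (hlipg : ∀ (t : ℝ) (x y : EuclideanSpace ℝ (Fin d)),
      ‖g x t - g y t‖ ≤ L₁ * ‖x - y‖)
    (hlipt : ∀ (x : EuclideanSpace ℝ (Fin d)) (s t : ℝ),
      |f x s - f x t| ≤ G₂ * |s - t|)
    (fstar : ℝ → ℝ)
    (hopt : ∀ (t : ℝ) (x : EuclideanSpace ℝ (Fin d)), fstar t ≤ f x t)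
    (hattained : ∀ t : ℝ, ∃ x, f x t = fstar t)
    (hlipstar : ∀ s t : ℝ, |fstar s - fstar t| ≤ G₂ * |s - t|)
    (x : ℕ → EuclideanSpace ℝ (Fin d))
    (hupd : ∀ k : ℕ, x (k + 1) = x k - (1 / L₁) • g (x k) (k * h))
    (T : ℕ) (hTpos : 0 < T)
    (hT : (T : ℝ) = (f (x 0) 0 - fstar 0) / (2 * h)) :
    (1 / (T : ℝ)) * ∑ k ∈ Finset.range T, ‖g (x k) (k * h)‖ ≤
      2 * Real.sqrt (L₁ * (1 + G₂) * h) := by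
  -- one-step descent + drift bound, telescoped by induction
  have key : ∀ n : ℕ,
      f (x n) (n * h) + 1 / (2 * L₁) * ∑ k ∈ Finset.range n, ‖g (x k) (k * h)‖ ^ 2 ≤
        f (x 0) 0 + G₂ * h * n := by
    intro n
    induction n with
    | zero => simp
    | succ n ih =>
      have hstep : f (x (n + 1)) (n * h) ≤
          f (x n) (n * h) - 1 / (2 * L₁) * ‖g (x n) (n * h)‖ ^ 2 := by
        have := descent_step (fun y => f y (n * h)) (fun y => g y (n * h)) L₁ hL₁
          (hgrad (n * h)) (fun a b => hlipg (n * h) a b) (x n)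
        rw [← hupd n] at this
        exact this
      have hdrift : f (x (n + 1)) ((n + 1 : ℕ) * h) ≤ f (x (n + 1)) (n * h) + G₂ * h := by
        have := hlipt (x (n + 1)) ((n + 1 : ℕ) * h) (n * h)
        have habs : |((n + 1 : ℕ) : ℝ) * h - n * h| = h := by
          push_cast
          rw [abs_of_nonneg (by nlinarith)]
          ring
        rw [habs] at this
        have := (abs_le.1 this).2
        linarith
      rw [Finset.sum_range_succ]
      push_cast
      push_cast at ih hdrift
      nlinarith [hstep]
  -- lower bound on f (x T) (T * h)
  have hlow : fstar 0 - G₂ * (T * h) ≤ f (x T) ((T : ℕ) * h) := by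
    have h1 := hlipstar 0 ((T : ℝ) * h)
    have h2 : |(0 : ℝ) - (T : ℝ) * h| = (T : ℝ) * h := by
      have hn : (0:ℝ) ≤ (T:ℝ) * h := by positivity
      rw [abs_sub_comm, sub_zero, abs_of_nonneg hn]
    rw [h2] at h1
    have h3 := (abs_le.1 h1).2
    have h4 := hopt ((T : ℝ) * h) (x T)
    push_cast
    linarith
  have hkeyT := key T
  -- bound on the sum of squares
  set S := ∑ k ∈ Finset.range T, ‖g (x k) (k * h)‖ ^ 2 with hS
  have hgap : f (x 0) 0 - fstar 0 = 2 * h * T := by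
    field_simp at hT
    linarith
  have hSbound : S ≤ 4 * L₁ * (1 + G₂) * h * T := by
    have : 1 / (2 * L₁) * S ≤ 2 * h * T + 2 * G₂ * h * T := by
      push_cast at hkeyT hlow
      nlinarith
    have h2L : 0 < 2 * L₁ := by linarith
    calc S = (2 * L₁) * (1 / (2 * L₁) * S) := by field_simp
      _ ≤ (2 * L₁) * (2 * h * T + 2 * G₂ * h * T) := by
          exact mul_le_mul_of_nonneg_left this h2L.le
      _ = 4 * L₁ * (1 + G₂) * h * T := by ring
  -- Cauchy-Schwarz
  set Sn := ∑ k ∈ Finset.range T, ‖g (x k) (k * h)‖ with hSn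
  have hCS : Sn ^ 2 ≤ (T : ℝ) * S := by
    have := Finset.sum_mul_sq_le_sq_mul_sq (Finset.range T) (fun _ => (1 : ℝ))
      (fun k => ‖g (x k) (k * h)‖)
    simpa [hSn, hS] using this
  have hSnonneg : 0 ≤ Sn := Finset.sum_nonneg fun _ _ => norm_nonneg _
  set A := L₁ * (1 + G₂) * h with hA
  have hApos : 0 < A := by positivity
  have hTr : (0 : ℝ) < T := by exact_mod_cast hTpos
  have hsq : Sn ^ 2 ≤ (2 * T * Real.sqrt A) ^ 2 := by
    have : Sn ^ 2 ≤ 4 * T ^ 2 * A := by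
      calc Sn ^ 2 ≤ (T : ℝ) * S := hCS
        _ ≤ (T : ℝ) * (4 * L₁ * (1 + G₂) * h * T) :=
            mul_le_mul_of_nonneg_left hSbound hTr.le
        _ = 4 * T ^ 2 * A := by rw [hA]; ring
    calc Sn ^ 2 ≤ 4 * T ^ 2 * A := this
      _ = (2 * T * Real.sqrt A) ^ 2 := by
          rw [mul_pow, mul_pow, Real.sq_sqrt hApos.le]; ring
  have hSnle : Sn ≤ 2 * T * Real.sqrt A := by
    have hrhs : 0 ≤ 2 * (T : ℝ) * Real.sqrt A := by positivity
    nlinarith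
  calc (1 / (T : ℝ)) * Sn ≤ (1 / (T : ℝ)) * (2 * T * Real.sqrt A) := by
        exact mul_le_mul_of_nonneg_left hSnle (by positivity)
    _ = 2 * Real.sqrt A := by field_simp
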